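/- Let f : [0,1]^d → ℝ be a non-negative, continuously differentiable, M₁-Lipschitz, continuous DR-submodular function, and let F be the surrogate potential. Then for every x, y ∈ [0,1]^d: (1 − e^{−1}) · ⟨∇F(x), y⟩ ≥ ∫₀¹ e^{z−1} [ f(h_z(x) ⊕ y) − f(h_z(x)) ] dz. -/

import Mathlib

set_option synthInstance.maxHeartbeats 1000000
set_option maxHeartbeats 2000000
set_option linter.unusedVariables false


open scoped RealInnerProductSpace
open MeasureTheory

noncomputable section

/-- Membership in the unit box `[0,1]^d`. -/
def inBox {d : ℕ} (x : EuclideanSpace ℝ (Fin d)) : Prop :=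
  ∀ i, x i ∈ Set.Icc (0 : ℝ) 1

/-- Continuous DR-submodularity: the gradient is coordinate-wise antitone on `[0,1]^d`. -/
def DRSubmodular {d : ℕ} (f : EuclideanSpace ℝ (Fin d) → ℝ) : Prop :=
  ∀ x y : EuclideanSpace ℝ (Fin d), inBox x → inBox y → (∀ i, x i ≤ y i) →
    ∀ i, gradient f y i ≤ gradient f x i

/-- The exponential reparametrization `h_z(x) = 1 - e^{-z x}` (coordinate-wise). -/
def hmap {d : ℕ} (z : ℝ) (x : EuclideanSpace ℝ (Fin d)) : EuclideanSpace ℝ (Fin d) :=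
  WithLp.toLp 2 (fun i => 1 - Real.exp (-(z * x i)))

/-- Coordinate-wise probabilistic sum `x ⊕ y = 1 - (1-x) ⊙ (1-y)`. -/
def psum {d : ℕ} (x y : EuclideanSpace ℝ (Fin d)) : EuclideanSpace ℝ (Fin d) :=
  WithLp.toLp 2 (fun i => 1 - (1 - x i) * (1 - y i))

/-- Coordinate-wise (Hadamard) product. -/
def had {d : ℕ} (u v : EuclideanSpace ℝ (Fin d)) : EuclideanSpace ℝ (Fin d) :=
  WithLp.toLp 2 (fun i => u i * v i)

/-- Coordinate-wise exponential `e^{-z x}`. -/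
def expv {d : ℕ} (z : ℝ) (x : EuclideanSpace ℝ (Fin d)) : EuclideanSpace ℝ (Fin d) :=
  WithLp.toLp 2 (fun i => Real.exp (-(z * x i)))

/-- The surrogate potential
`F(x) = ∫₀¹ (e^{z-1} / ((1-e⁻¹) z)) (f(1 - e^{-z x}) - f(0)) dz`. -/
def surrogate {d : ℕ} (f : EuclideanSpace ℝ (Fin d) → ℝ)
    (x : EuclideanSpace ℝ (Fin d)) : ℝ :=
  ∫ z in (0:ℝ)..1, (Real.exp (z - 1) / ((1 - Real.exp (-1)) * z)) * (f (hmap z x) - f 0)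

/-- A set `K ⊆ [0,1]^d` is down-closed if `y ∈ K` and `0 ≤ x ≤ y` imply `x ∈ K`. -/
def DownClosed {d : ℕ} (K : Set (EuclideanSpace ℝ (Fin d))) : Prop :=
  ∀ y ∈ K, ∀ x : EuclideanSpace ℝ (Fin d), (∀ i, 0 ≤ x i) → (∀ i, x i ≤ y i) → x ∈ K

namespace Stmt7Aux

variable {d : ℕ}

local notation "E" => EuclideanSpace ℝ (Fin d)

lemma coord_abs_le_norm (u : E) (i : Fin d) : |u i| ≤ ‖u‖ := by
  calc |u i| = |@inner ℝ _ _ (EuclideanSpace.single i (1:ℝ)) u| := by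
        rw [EuclideanSpace.inner_single_left]; simp
    _ ≤ ‖EuclideanSpace.single i (1:ℝ)‖ * ‖u‖ := abs_real_inner_le_norm _ _
    _ = ‖u‖ := by rw [EuclideanSpace.norm_single]; simp

lemma proj_norm_le (i : Fin d) : ‖(EuclideanSpace.proj i : E →L[ℝ] ℝ)‖ ≤ 1 := by
  apply ContinuousLinearMap.opNorm_le_bound _ zero_le_one
  intro u
  simpa using coord_abs_le_norm u i

lemma decomp (u : E) : u = ∑ i, u i • EuclideanSpace.single i (1:ℝ) := by
  ext j
  rw [WithLp.ofLp_sum, Finset.sum_apply]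
  simp [EuclideanSpace.single_apply]

lemma norm_le_card_mul (u : E) (b : ℝ) (hb : ∀ i, |u i| ≤ b) : ‖u‖ ≤ d * b := by
  calc ‖u‖ = ‖∑ i, u i • EuclideanSpace.single i (1:ℝ)‖ := by rw [← decomp]
    _ ≤ ∑ i : Fin d, ‖u i • EuclideanSpace.single i (1:ℝ)‖ := norm_sum_le _ _
    _ ≤ ∑ _i : Fin d, b := by
        refine Finset.sum_le_sum fun i _ => ?_
        rw [norm_smul, EuclideanSpace.norm_single]
        simpa using hb i
    _ = d * b := by simp [Finset.sum_const, Finset.card_univ, nsmul_eq_mul]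

/-- Coordinate-wise multiplication operator. -/
def Dmap (w : Fin d → ℝ) : E →L[ℝ] E :=
  ∑ i, w i • ((EuclideanSpace.proj i : E →L[ℝ] ℝ).smulRight (EuclideanSpace.single i (1:ℝ)))

lemma Dmap_apply (w : Fin d → ℝ) (v : E) (j : Fin d) : Dmap w v j = w j * v j := by
  simp only [Dmap, ContinuousLinearMap.sum_apply, ContinuousLinearMap.smul_apply,
    ContinuousLinearMap.smulRight_apply]
  rw [WithLp.ofLp_sum, Finset.sum_apply]
  simp [EuclideanSpace.single_apply, EuclideanSpace.proj, mul_comm]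

lemma Dmap_norm_le (w : Fin d → ℝ) (b : ℝ) (hb0 : 0 ≤ b) (hb : ∀ i, |w i| ≤ b) :
    ‖Dmap w‖ ≤ d * b := by
  calc ‖Dmap w‖ ≤ ∑ i : Fin d,
        ‖w i • ((EuclideanSpace.proj i : E →L[ℝ] ℝ).smulRight (EuclideanSpace.single i (1:ℝ)))‖ :=
        norm_sum_le _ _
    _ ≤ ∑ _i : Fin d, b := by
        refine Finset.sum_le_sum fun i _ => ?_
        have hn := norm_smul (w i)
          ((EuclideanSpace.proj i : E →L[ℝ] ℝ).smulRight (EuclideanSpace.single i (1:ℝ)))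
        rw [hn, ContinuousLinearMap.norm_smulRight_apply, EuclideanSpace.norm_single]
        have h1 := proj_norm_le (d := d) i
        have h2 := hb i
        have h3 : (0:ℝ) ≤ ‖(EuclideanSpace.proj i : E →L[ℝ] ℝ)‖ := norm_nonneg _
        simp only [Real.norm_eq_abs, norm_one, mul_one]
        nlinarith [abs_nonneg (w i)]
    _ = d * b := by simp [Finset.sum_const, Finset.card_univ, nsmul_eq_mul]

lemma Dmap_continuous (w : ℝ → Fin d → ℝ) (hw : ∀ i, Continuous fun z => w z i) :
    Continuous fun z => Dmap (w z) := by
  unfold Dmap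
  exact continuous_finset_sum _ fun i _ => (hw i).smul continuous_const

lemma continuous_of_coords (g : ℝ → E) (hc : ∀ i, Continuous fun z => g z i) :
    Continuous g := by
  have h : g = fun z => ∑ i, (g z i) • EuclideanSpace.single i (1:ℝ) :=
    funext fun z => decomp (g z)
  rw [h]
  exact continuous_finset_sum _ fun i _ => (hc i).smul continuous_const

lemma hmap_hasFDerivAt (z : ℝ) (x : E) :
    HasFDerivAt (hmap z) (Dmap fun i => z * Real.exp (-(z * x i))) x := by
  have hrw : hmap (d := d) z = fun x : E =>
      ∑ i, (1 - Real.exp (-(z * x i))) • EuclideanSpace.single i (1:ℝ) :=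
    funext fun x => (decomp (hmap z x)).trans (by rfl)
  rw [hrw]
  apply HasFDerivAt.fun_sum
  intro i _
  have hscal : HasDerivAt (fun t : ℝ => 1 - Real.exp (-(z * t)))
      (z * Real.exp (-(z * x i))) (x i) := by
    have h1 : HasDerivAt (fun t : ℝ => -(z * t)) (-z) (x i) := by
      simpa [Pi.neg_def] using ((hasDerivAt_id (x i)).const_mul z).neg
    have h2 := h1.exp
    have h3 := (hasDerivAt_const (x i) (1:ℝ)).fun_sub h2
    exact h3.congr_deriv (by ring)
  have hproj : HasFDerivAt (fun u : E => u i) (EuclideanSpace.proj i : E →L[ℝ] ℝ) x :=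
    (EuclideanSpace.proj i : E →L[ℝ] ℝ).hasFDerivAt
  have hcomp := hscal.comp_hasFDerivAt x hproj
  have := hcomp.smul_const (EuclideanSpace.single i (1:ℝ))
  convert this using 1 <;> ext v j <;>
  simp [ContinuousLinearMap.smulRight_apply, mul_comm, mul_assoc, mul_left_comm]

lemma fderiv_eq_sum (f : E → ℝ) (w v : E) :
    fderiv ℝ f w v = ∑ i, gradient f w i * v i := by
  have h1 : (fderiv ℝ f w) v = ⟪gradient f w, v⟫ := by
    rw [gradient]
    exact (InnerProductSpace.toDual_symm_apply).symm
  rw [h1, PiLp.inner_apply]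
  simp [RCLike.inner_apply, mul_comm]

lemma grad_ineq (f : E → ℝ) (hf : ContDiff ℝ 1 f) (hDR : DRSubmodular f)
    (u v : E) (hu : inBox u) (hv : inBox v) (hle : ∀ i, u i ≤ v i) :
    f v - f u ≤ ∑ i, gradient f u i * (v i - u i) := by
  set w : ℝ → E := fun t => u + t • (v - u) with hw
  have hwc : ∀ t i, w t i = u i + t * (v i - u i) := fun t i => rfl
  have hwbox : ∀ t ∈ Set.Icc (0:ℝ) 1, inBox (w t) ∧ ∀ i, u i ≤ w t i := by
    intro t ht
    constructor
    · intro i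
      have h1 := (hu i).1; have h2 := (hu i).2
      have h3 := (hv i).1; have h4 := (hv i).2
      have h5 := hle i
      rw [hwc]
      constructor <;> nlinarith [ht.1, ht.2]
    · intro i
      rw [hwc]
      nlinarith [ht.1, hle i]
  have hderiv : ∀ t ∈ Set.uIcc (0:ℝ) 1,
      HasDerivAt (fun t => f (w t)) (fderiv ℝ f (w t) (v - u)) t := by
    intro t _
    have hwd : HasDerivAt w (v - u) t := by
      have : HasDerivAt (fun t : ℝ => t • (v - u)) ((1:ℝ) • (v - u)) t := by
        simpa using (hasDerivAt_id t).smul_const (v - u)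
      simpa only [one_smul] using (this.const_add u)
    exact ((hf.differentiable one_ne_zero (w t)).hasFDerivAt).comp_hasDerivAt t hwd
  have hcont : Continuous fun t => fderiv ℝ f (w t) (v - u) := by
    have hwcont : Continuous w := by
      apply continuous_of_coords
      intro i
      simp only [hwc]
      fun_prop
    exact ((hf.continuous_fderiv one_ne_zero).comp hwcont).clm_apply continuous_const
  have hftc : ∫ t in (0:ℝ)..1, fderiv ℝ f (w t) (v - u) = f (w 1) - f (w 0) :=
    intervalIntegral.integral_eq_sub_of_hasDerivAt hderiv
      (hcont.intervalIntegrable 0 1)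
  have hw0 : w 0 = u := by ext i; rw [hwc]; ring
  have hw1 : w 1 = v := by ext i; rw [hwc]; ring
  rw [hw0, hw1] at hftc
  rw [← hftc]
  have hint : ∫ t in (0:ℝ)..1, fderiv ℝ f (w t) (v - u) ≤
      ∫ _t in (0:ℝ)..1, fderiv ℝ f u (v - u) := by
    apply intervalIntegral.integral_mono_on zero_le_one (hcont.intervalIntegrable 0 1)
      intervalIntegrable_const
    intro t ht
    rw [fderiv_eq_sum, fderiv_eq_sum]
    refine Finset.sum_le_sum fun i _ => ?_
    have h1 : v i - u i = (v - u) i := rfl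
    have h2 : gradient f (w t) i ≤ gradient f u i :=
      hDR u (w t) hu (hwbox t ht).1 (hwbox t ht).2 i
    have h3 : (0:ℝ) ≤ (v - u) i := by
      have : (v - u) i = v i - u i := rfl
      rw [this]; linarith [hle i]
    exact mul_le_mul_of_nonneg_right h2 h3
  calc ∫ t in (0:ℝ)..1, fderiv ℝ f (w t) (v - u)
      ≤ ∫ _t in (0:ℝ)..1, fderiv ℝ f u (v - u) := hint
    _ = fderiv ℝ f u (v - u) := by simp
    _ = ∑ i, gradient f u i * (v i - u i) := by
        rw [fderiv_eq_sum]; rfl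

end Stmt7Aux

/-- Gain-term lower bound via probabilistic sums.
For a non-negative, continuously differentiable, `M₁`-Lipschitz, continuous
DR-submodular `f` with surrogate potential `F`, for all `x, y ∈ [0,1]^d`:
`(1-e⁻¹)⟨∇F(x), y⟩ ≥ ∫₀¹ e^{z-1} [f(h_z(x) ⊕ y) - f(h_z(x))] dz`. -/
theorem stmt7 {d : ℕ} (f : EuclideanSpace ℝ (Fin d) → ℝ) (M₁ : ℝ)
    (hf : ContDiff ℝ 1 f) (hpos : ∀ x, inBox x → 0 ≤ f x)
    (hLip : ∀ x, inBox x → ‖gradient f x‖ ≤ M₁) (hDR : DRSubmodular f) :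
    ∀ x y : EuclideanSpace ℝ (Fin d), inBox x → inBox y →
      (∫ z in (0:ℝ)..1, Real.exp (z - 1) * (f (psum (hmap z x) y) - f (hmap z x))) ≤
        (1 - Real.exp (-1)) * @inner ℝ _ _ (gradient (surrogate f) x) y := by
  intro x y hx hy
  classical
  set c : ℝ → ℝ := fun z => Real.exp (z - 1) / ((1 - Real.exp (-1)) * z) with hc
  have heI : (0:ℝ) < 1 - Real.exp (-1) := by
    have : Real.exp (-1) < 1 := by rw [Real.exp_lt_one_iff]; norm_num
    linarith
  obtain ⟨C₀, hC₀⟩ := (isCompact_closedBall (0 : EuclideanSpace ℝ (Fin d))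
      (3*d)).exists_bound_of_continuousOn ((hf.continuous_fderiv one_ne_zero).continuousOn)
  set C := max C₀ 0 with hCdef
  have hC0 : 0 ≤ C := le_max_right _ _
  have hC : ∀ u : EuclideanSpace ℝ (Fin d), ‖u‖ ≤ 3*d → ‖fderiv ℝ f u‖ ≤ C := fun u hu =>
    le_trans (hC₀ u (by simpa [Metric.mem_closedBall, dist_zero_right] using hu))
      (le_max_left _ _)
  set B : ℝ := 3 * d * C / (1 - Real.exp (-1)) with hB
  have hB0 : 0 ≤ B := by positivity
  set D : ℝ → EuclideanSpace ℝ (Fin d) → (EuclideanSpace ℝ (Fin d) →L[ℝ] EuclideanSpace ℝ (Fin d)) :=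
    fun z x' => Stmt7Aux.Dmap fun i => z * Real.exp (-(z * x' i)) with hD
  set F' : ℝ → EuclideanSpace ℝ (Fin d) →L[ℝ] ℝ :=
    fun z => c z • ((fderiv ℝ f (hmap z x)).comp (D z x)) with hF'
  have hcoord : ∀ x' ∈ Metric.ball x (1:ℝ), ∀ i, -1 ≤ x' i ∧ x' i ≤ 2 := by
    intro x' hx' i
    have h1 : |x' i - x i| ≤ ‖x' - x‖ := by
      have := Stmt7Aux.coord_abs_le_norm (x' - x) i
      simpa using this
    have h2 : ‖x' - x‖ < 1 := by rwa [Metric.mem_ball, dist_eq_norm] at hx'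
    have h3 := (hx i).1; have h4 := (hx i).2
    have h5 := abs_le.1 (le_of_lt (lt_of_le_of_lt h1 h2))
    constructor <;> [linarith [h5.1]; linarith [h5.2]]
  have hexp3 : Real.exp 1 ≤ 3 := by
    have := Real.exp_one_lt_d9
    linarith
  have hmapball : ∀ z ∈ Set.Ioc (0:ℝ) 1, ∀ x' ∈ Metric.ball x (1:ℝ),
      ‖fderiv ℝ f (hmap z x')‖ ≤ C := by
    intro z hz x' hx'
    apply hC
    have hcb : ∀ i, |hmap z x' i| ≤ 3 := by
      intro i
      obtain ⟨hi1, hi2⟩ := hcoord x' hx' i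
      have hzexp : Real.exp (-(z * x' i)) ≤ Real.exp 1 :=
        Real.exp_le_exp.2 (by nlinarith [hz.1, hz.2])
      have hpos' : 0 < Real.exp (-(z * x' i)) := Real.exp_pos _
      have : hmap z x' i = 1 - Real.exp (-(z * x' i)) := rfl
      rw [this, abs_le]
      constructor <;> nlinarith
    calc ‖hmap z x'‖ ≤ d * 3 := Stmt7Aux.norm_le_card_mul _ 3 hcb
      _ ≤ 3 * d := le_of_eq (by ring)
  have hDnorm : ∀ z ∈ Set.Ioc (0:ℝ) 1, ∀ x' ∈ Metric.ball x (1:ℝ),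
      ‖D z x'‖ ≤ d * (3 * z) := by
    intro z hz x' hx'
    apply Stmt7Aux.Dmap_norm_le _ _ (by nlinarith [hz.1])
    intro i
    obtain ⟨hi1, hi2⟩ := hcoord x' hx' i
    have hzexp : Real.exp (-(z * x' i)) ≤ Real.exp 1 :=
      Real.exp_le_exp.2 (by nlinarith [hz.1, hz.2])
    have hpos' : 0 < Real.exp (-(z * x' i)) := Real.exp_pos _
    rw [abs_of_nonneg (mul_nonneg hz.1.le (Real.exp_nonneg _))]
    nlinarith [hz.1]
  have hcz : ∀ z ∈ Set.Ioc (0:ℝ) 1, 0 ≤ c z := by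
    intro z hz
    simp only [hc]
    exact div_nonneg (Real.exp_nonneg _) (mul_nonneg heI.le hz.1.le)
  have hexpz1 : ∀ z ∈ Set.Ioc (0:ℝ) 1, Real.exp (z - 1) ≤ 1 := by
    intro z hz
    rw [Real.exp_le_one_iff]
    linarith [hz.2]
  have hczB : ∀ z ∈ Set.Ioc (0:ℝ) 1, c z * (C * (↑d * (3*z))) ≤ B := by
    intro z hz
    have hzne : z ≠ 0 := ne_of_gt hz.1
    have heIne : (1 - Real.exp (-1)) ≠ 0 := ne_of_gt heI
    have heq : c z * (C * (↑d * (3*z))) = Real.exp (z-1) * (3 * ↑d * C / (1 - Real.exp (-1))) := by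
      simp only [hc]
      field_simp
    rw [heq, hB]
    exact mul_le_of_le_one_left (by positivity) (hexpz1 z hz)
  have hGderiv : ∀ z ∈ Set.Ioc (0:ℝ) 1, ∀ x' : EuclideanSpace ℝ (Fin d),
      HasFDerivAt (fun x'' => c z * (f (hmap z x'') - f 0))
      (c z • ((fderiv ℝ f (hmap z x')).comp (D z x'))) x' := by
    intro z _ x'
    have h1 := Stmt7Aux.hmap_hasFDerivAt (d := d) z x'
    have h2 := ((hf.differentiable one_ne_zero (hmap z x')).hasFDerivAt).comp x' h1
    exact (h2.sub_const (f 0)).const_mul (c z)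
  have hnormF' : ∀ z ∈ Set.Ioc (0:ℝ) 1, ∀ x' ∈ Metric.ball x (1:ℝ),
      ‖c z • ((fderiv ℝ f (hmap z x')).comp (D z x'))‖ ≤ B := by
    intro z hz x' hx'
    have h1 : ‖(fderiv ℝ f (hmap z x')).comp (D z x')‖ ≤ C * (↑d * (3*z)) :=
      le_trans (ContinuousLinearMap.opNorm_comp_le _ _)
        (mul_le_mul (hmapball z hz x' hx') (hDnorm z hz x' hx') (norm_nonneg _) hC0)
    have h2 : ‖c z • ((fderiv ℝ f (hmap z x')).comp (D z x'))‖
        = c z * ‖(fderiv ℝ f (hmap z x')).comp (D z x')‖ := by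
      have hn := norm_smul (c z) ((fderiv ℝ f (hmap z x')).comp (D z x'))
      rw [hn, Real.norm_eq_abs, abs_of_nonneg (hcz z hz)]
    rw [h2]
    calc c z * ‖(fderiv ℝ f (hmap z x')).comp (D z x')‖
        ≤ c z * (C * (↑d * (3*z))) := mul_le_mul_of_nonneg_left h1 (hcz z hz)
      _ ≤ B := hczB z hz
  have hcCont : ContinuousOn c (Set.Ioc (0:ℝ) 1) := by
    simp only [hc]
    apply ContinuousOn.div (by fun_prop) (by fun_prop)
    intro z hz
    have := hz.1
    positivity
  have hhmapCont : ∀ x' : EuclideanSpace ℝ (Fin d), Continuous fun z => hmap z x' := by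
    intro x'
    apply Stmt7Aux.continuous_of_coords
    intro i
    have : (fun z => hmap z x' i) = fun z => 1 - Real.exp (-(z * x' i)) := rfl
    rw [this]
    fun_prop
  have hDCont : Continuous fun z => D z x := by
    simp only [hD]
    apply Stmt7Aux.Dmap_continuous
    intro i
    fun_prop
  set μ := volume.restrict (Set.Ioc (0:ℝ) 1) with hμ
  have hmeasIoc : MeasurableSet (Set.Ioc (0:ℝ) 1) := measurableSet_Ioc
  haveI hfin : IsFiniteMeasure μ := by
    constructor
    rw [hμ, Measure.restrict_apply_univ]
    simp [Real.volume_Ioc]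
  have hF_meas : ∀ᶠ x' in nhds x,
      AEStronglyMeasurable (fun z => c z * (f (hmap z x') - f 0)) μ := by
    apply Filter.Eventually.of_forall
    intro x'
    apply ContinuousOn.aestronglyMeasurable _ hmeasIoc
    exact hcCont.mul ((hf.continuous.comp (hhmapCont x')).sub continuous_const).continuousOn
  have hbound_f0 : ∀ z ∈ Set.Ioc (0:ℝ) 1, |f (hmap z x) - f 0| ≤ C * (↑d * z) := by
    intro z hz
    have hzero : (0 : EuclideanSpace ℝ (Fin d)) ∈ Metric.closedBall (0 : EuclideanSpace ℝ (Fin d)) (3*d) := by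
      simp only [Metric.mem_closedBall, dist_self]
      positivity
    have hnorm : ‖hmap z x‖ ≤ ↑d * z := by
      apply Stmt7Aux.norm_le_card_mul
      intro i
      have h1 := (hx i).1; have h2 := (hx i).2
      have h3 : 0 ≤ z * x i := by nlinarith [hz.1]
      have h4 : Real.exp (-(z * x i)) ≤ 1 := Real.exp_le_one_iff.2 (by linarith)
      have h5 : 1 - Real.exp (-(z * x i)) ≤ z * x i := by
        nlinarith [Real.add_one_le_exp (-(z * x i))]
      have h6 : hmap z x i = 1 - Real.exp (-(z * x i)) := rfl
      rw [h6, abs_le]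
      constructor
      · nlinarith [hz.1]
      · nlinarith [hz.1, hz.2]
    have hmem : hmap z x ∈ Metric.closedBall (0 : EuclideanSpace ℝ (Fin d)) (3*d) := by
      simp only [Metric.mem_closedBall, dist_zero_right]
      calc ‖hmap z x‖ ≤ ↑d * z := hnorm
        _ ≤ 3 * ↑d := by nlinarith [hz.1, hz.2, Nat.cast_nonneg (α := ℝ) d]
    have hmv := Convex.norm_image_sub_le_of_norm_hasFDerivWithin_le
      (f' := fun u => fderiv ℝ f u)
      (fun u _ => ((hf.differentiable one_ne_zero u).hasFDerivAt).hasFDerivWithinAt)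
      (fun u hu => hC u (by simpa [Metric.mem_closedBall, dist_zero_right] using hu))
      (convex_closedBall _ _) hzero hmem
    calc |f (hmap z x) - f 0| = ‖f (hmap z x) - f 0‖ := (Real.norm_eq_abs _).symm
      _ ≤ C * ‖hmap z x - 0‖ := hmv
      _ ≤ C * (↑d * z) := by rw [sub_zero]; exact mul_le_mul_of_nonneg_left hnorm hC0
  have hF_int : Integrable (fun z => c z * (f (hmap z x) - f 0)) μ := by
    apply Integrable.mono' (integrable_const (C * ↑d / (1 - Real.exp (-1))))
    · apply ContinuousOn.aestronglyMeasurable _ hmeasIoc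
      exact hcCont.mul ((hf.continuous.comp (hhmapCont x)).sub continuous_const).continuousOn
    · rw [hμ, ae_restrict_iff' hmeasIoc]
      apply Filter.Eventually.of_forall
      intro z hz
      rw [Real.norm_eq_abs, abs_mul, abs_of_nonneg (hcz z hz)]
      have hzne : z ≠ 0 := ne_of_gt hz.1
      have heIne : (1 - Real.exp (-1)) ≠ 0 := ne_of_gt heI
      have heq : c z * (C * (↑d * z)) = Real.exp (z-1) * (C * ↑d / (1 - Real.exp (-1))) := by
        simp only [hc]
        field_simp
      calc c z * |f (hmap z x) - f 0| ≤ c z * (C * (↑d * z)) :=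
            mul_le_mul_of_nonneg_left (hbound_f0 z hz) (hcz z hz)
        _ = Real.exp (z-1) * (C * ↑d / (1 - Real.exp (-1))) := heq
        _ ≤ C * ↑d / (1 - Real.exp (-1)) :=
            mul_le_of_le_one_left (by positivity) (hexpz1 z hz)
  have hF'_meas : AEStronglyMeasurable F' μ := by
    apply ContinuousOn.aestronglyMeasurable _ hmeasIoc
    apply ContinuousOn.smul hcCont
    exact (((hf.continuous_fderiv one_ne_zero).comp (hhmapCont x)).clm_comp hDCont).continuousOn
  have h_lip : ∀ᵐ z ∂μ, LipschitzOnWith (Real.nnabs B)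
      (fun x' => c z * (f (hmap z x') - f 0)) (Metric.ball x 1) := by
    rw [hμ, ae_restrict_iff' hmeasIoc]
    apply Filter.Eventually.of_forall
    intro z hz
    apply Convex.lipschitzOnWith_of_nnnorm_hasFDerivWithin_le
      (f' := fun x' => c z • ((fderiv ℝ f (hmap z x')).comp (D z x')))
      (fun x' _ => (hGderiv z hz x').hasFDerivWithinAt)
      (fun x' hx' => ?_) (convex_ball _ _)
    rw [← NNReal.coe_le_coe, coe_nnnorm, Real.coe_nnabs, abs_of_nonneg hB0]
    exact hnormF' z hz x' hx'
  have h_diff : ∀ᵐ z ∂μ, HasFDerivAt (fun x' => c z * (f (hmap z x') - f 0)) (F' z) x := by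
    rw [hμ, ae_restrict_iff' hmeasIoc]
    exact Filter.Eventually.of_forall fun z hz => hGderiv z hz x
  obtain ⟨hFint', hFder⟩ := hasFDerivAt_integral_of_dominated_loc_of_lip (Metric.ball_mem_nhds x one_pos)
    hF_meas hF_int hF'_meas h_lip (integrable_const B) h_diff
  have hsur : surrogate f = fun x' => ∫ z, c z * (f (hmap z x') - f 0) ∂μ := by
    funext x'
    rw [surrogate, intervalIntegral.integral_of_le zero_le_one]
  have hFder2 : HasFDerivAt (surrogate f) (∫ z, F' z ∂μ) x := by
    rw [hsur]; exact hFder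
  have hgrad : @inner ℝ _ _ (gradient (surrogate f) x) y = ∫ z, F' z y ∂μ := by
    have h1 : gradient (surrogate f) x
        = (InnerProductSpace.toDual ℝ (EuclideanSpace ℝ (Fin d))).symm (∫ z, F' z ∂μ) := by
      rw [gradient, hFder2.fderiv]
    rw [h1, InnerProductSpace.toDual_symm_apply, ContinuousLinearMap.integral_apply hFint']
  rw [hgrad, ← MeasureTheory.integral_const_mul,
    intervalIntegral.integral_of_le zero_le_one, hμ]
  apply setIntegral_mono_on
  · have h1 : Continuous fun z => psum (hmap z x) y := by
      apply Stmt7Aux.continuous_of_coords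
      intro i
      have : (fun z => psum (hmap z x) y i)
          = fun z => 1 - (1 - (1 - Real.exp (-(z * x i)))) * (1 - y i) := rfl
      rw [this]
      fun_prop
    have hcontL : Continuous fun z =>
        Real.exp (z - 1) * (f (psum (hmap z x) y) - f (hmap z x)) := by
      apply Continuous.mul (by fun_prop)
      exact ((hf.continuous.comp h1).sub (hf.continuous.comp (hhmapCont x)))
    exact hcontL.integrableOn_Ioc
  · exact (hFint'.apply_continuousLinearMap y).const_mul _
  · exact hmeasIoc
  · intro z hz
    set u : EuclideanSpace ℝ (Fin d) := hmap z x with hu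
    have hui : ∀ i, u i = 1 - Real.exp (-(z * x i)) := fun i => rfl
    have hzx : ∀ i, 0 ≤ z * x i ∧ z * x i ≤ z := fun i =>
      ⟨by nlinarith [hz.1, (hx i).1], by nlinarith [hz.1, (hx i).2]⟩
    have hub : inBox u := by
      intro i
      have h4 : Real.exp (-(z * x i)) ≤ 1 := Real.exp_le_one_iff.2 (by linarith [(hzx i).1])
      have h5 : 0 < Real.exp (-(z * x i)) := Real.exp_pos _
      rw [hui]
      constructor <;> [linarith; linarith]
    have hvb : inBox (psum u y) := by
      intro i
      have h1 := (hub i).1; have h2 := (hub i).2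
      have h3 := (hy i).1; have h4 := (hy i).2
      have h5 : psum u y i = 1 - (1 - u i) * (1 - y i) := rfl
      rw [h5]
      constructor <;> nlinarith
    have hle : ∀ i, u i ≤ psum u y i := by
      intro i
      have h5 : psum u y i = 1 - (1 - u i) * (1 - y i) := rfl
      rw [h5]
      nlinarith [(hub i).1, (hub i).2, (hy i).1, (hy i).2]
    have hkey := Stmt7Aux.grad_ineq f hf hDR u (psum u y) hub hvb hle
    have hdiff : ∀ i, psum u y i - u i = Real.exp (-(z * x i)) * y i := by
      intro i
      have h0 : (1:ℝ) - u i = Real.exp (-(z * x i)) := by rw [hui]; ring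
      have h5 : psum u y i = 1 - (1 - u i) * (1 - y i) := rfl
      calc psum u y i - u i = (1 - u i) * y i := by rw [h5]; ring
        _ = Real.exp (-(z * x i)) * y i := by rw [h0]
    have hFy : F' z y = c z * ∑ i, gradient f u i * (z * Real.exp (-(z * x i)) * y i) := by
      simp only [hF', ContinuousLinearMap.smul_apply, ContinuousLinearMap.comp_apply,
        smul_eq_mul]
      congr 1
      rw [← hu, Stmt7Aux.fderiv_eq_sum]
      apply Finset.sum_congr rfl
      intro i _
      simp only [hD]
      rw [Stmt7Aux.Dmap_apply]
    have hzne : z ≠ 0 := ne_of_gt hz.1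
    have heIne : (1 - Real.exp (-1)) ≠ 0 := ne_of_gt heI
    have hczz : (1 - Real.exp (-1)) * c z * z = Real.exp (z - 1) := by
      simp only [hc]
      field_simp
    calc Real.exp (z-1) * (f (psum u y) - f u)
        ≤ Real.exp (z-1) * ∑ i, gradient f u i * (psum u y i - u i) :=
          mul_le_mul_of_nonneg_left hkey (le_of_lt (Real.exp_pos _))
      _ = (1 - Real.exp (-1)) * F' z y := by
          rw [hFy, ← mul_assoc, Finset.mul_sum, Finset.mul_sum]
          apply Finset.sum_congr rfl
          intro i _
          rw [hdiff i, ← hczz]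
          ring
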